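/- Let L be a finite-dimensional non-abelian anti-commutative algebra with Z(L) = 0, and let I be a minimal ideal of L. If J is another ideal of L with I ∩ J = 0, then I·J = 0. Moreover, if the set of images of I under Aut(L) sums to L, then L is the internal direct sum of the distinct images of I under Aut(L). -/
import Mathlib


variable {F L : Type*} [Field F] [AddCommGroup L] [Module F L]

/-- A linear automorphism of `L` preserving the product `mul`. -/
def IsMulAut (mul : L →ₗ[F] L →ₗ[F] L) (e : L ≃ₗ[F] L) : Prop :=
  ∀ x y : L, e (mul x y) = mul (e x) (e y)

/-- An ideal of the anti-commutative algebra `(L, mul)`. -/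
def IsAlgIdeal (mul : L →ₗ[F] L →ₗ[F] L) (W : Submodule F L) : Prop :=
  ∀ x ∈ W, ∀ y : L, mul x y ∈ W

/-- A minimal (non-zero) ideal. -/
def IsMinIdeal (mul : L →ₗ[F] L →ₗ[F] L) (I : Submodule F L) : Prop :=
  IsAlgIdeal mul I ∧ I ≠ ⊥ ∧ ∀ J : Submodule F L, IsAlgIdeal mul J → J ≤ I → J = ⊥ ∨ J = I

lemma aux_anti (mul : L →ₗ[F] L →ₗ[F] L) (halt : ∀ x : L, mul x x = 0) (x y : L) :
    mul x y = - mul y x := by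
  have h := halt (x + y)
  simp only [map_add, LinearMap.add_apply, halt, zero_add, add_zero] at h
  exact eq_neg_of_add_eq_zero_right h

lemma aux_symm {mul : L →ₗ[F] L →ₗ[F] L} {e : L ≃ₗ[F] L} (he : IsMulAut mul e) :
    IsMulAut mul e.symm := fun x y => by
  apply e.injective
  rw [he]
  simp

lemma aux_map {mul : L →ₗ[F] L →ₗ[F] L} {e : L ≃ₗ[F] L} (he : IsMulAut mul e)
    {I : Submodule F L} (hI : IsAlgIdeal mul I) :
    IsAlgIdeal mul (I.map (e : L →ₗ[F] L)) := by
  rintro _ ⟨x, hx, rfl⟩ y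
  refine ⟨mul x (e.symm y), hI x hx _, ?_⟩
  simp only [LinearEquiv.coe_coe]
  rw [he, e.apply_symm_apply]

lemma aux_map_min {mul : L →ₗ[F] L →ₗ[F] L} {e : L ≃ₗ[F] L} (he : IsMulAut mul e)
    {I : Submodule F L} (hI : IsMinIdeal mul I) :
    IsMinIdeal mul (I.map (e : L →ₗ[F] L)) := by
  refine ⟨aux_map he hI.1, ?_, ?_⟩
  · intro h
    apply hI.2.1
    apply Submodule.map_injective_of_injective e.injective
    simpa using h
  · intro J hJ hJle
    have h1 : J.map (e.symm : L →ₗ[F] L) ≤ I := by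
      intro x hx
      obtain ⟨j, hj, rfl⟩ := hx
      obtain ⟨i, hi, hie⟩ := hJle hj
      simpa [← hie] using hi
    rcases hI.2.2 _ (aux_map (aux_symm he) hJ) h1 with h | h
    · left
      have := congrArg (Submodule.map (e : L →ₗ[F] L)) h
      simpa [← Submodule.map_comp] using this
    · right
      have := congrArg (Submodule.map (e : L →ₗ[F] L)) h
      simpa [← Submodule.map_comp] using this

lemma aux_sSup {mul : L →ₗ[F] L →ₗ[F] L} {S : Set (Submodule F L)}
    (h : ∀ W ∈ S, IsAlgIdeal mul W) : IsAlgIdeal mul (sSup S) := by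
  intro x hx y
  have hle : sSup S ≤ Submodule.comap (mul.flip y) (sSup S) := by
    apply sSup_le
    intro W hW w hw
    exact le_sSup hW (h W hW w hw y)
  exact hle hx

lemma aux_prod_zero {mul : L →ₗ[F] L →ₗ[F] L} (halt : ∀ x : L, mul x x = 0)
    {I J : Submodule F L} (hI : IsAlgIdeal mul I) (hJ : IsAlgIdeal mul J)
    (hd : I ⊓ J = ⊥) : ∀ x ∈ I, ∀ y ∈ J, mul x y = 0 := by
  intro x hx y hy
  have h1 : mul x y ∈ I := hI x hx y
  have h2 : mul x y ∈ J := by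
    rw [aux_anti mul halt x y]
    exact J.neg_mem (hJ y hy x)
  have : mul x y ∈ I ⊓ J := ⟨h1, h2⟩
  rw [hd] at this
  simpa using this

/-- Let `L` be a finite-dimensional non-abelian anti-commutative algebra
with `Z(L) = 0` and `I` a minimal ideal. (1) Any ideal `J` with `I ∩ J = 0`
satisfies `I·J = 0`. (2) If the images of `I` under `Aut(L)` sum to `L`, then `L`
is the internal direct sum of the distinct images of `I` under `Aut(L)`. -/
theorem stmt8 (mul : L →ₗ[F] L →ₗ[F] L) [FiniteDimensional F L]
    (halt : ∀ x : L, mul x x = 0) (hna : ∃ x y : L, mul x y ≠ 0)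
    (hz : ∀ x : L, (∀ y : L, mul x y = 0) → x = 0)
    (I : Submodule F L) (hI : IsMinIdeal mul I) :
    (∀ J : Submodule F L, IsAlgIdeal mul J → I ⊓ J = ⊥ →
        ∀ x ∈ I, ∀ y ∈ J, mul x y = 0) ∧
    (sSup {W : Submodule F L | ∃ e : L ≃ₗ[F] L, IsMulAut mul e ∧
        W = I.map (e : L →ₗ[F] L)} = ⊤ →
      sSupIndep {W : Submodule F L | ∃ e : L ≃ₗ[F] L, IsMulAut mul e ∧
        W = I.map (e : L →ₗ[F] L)} ∧
      sSup {W : Submodule F L | ∃ e : L ≃ₗ[F] L, IsMulAut mul e ∧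
        W = I.map (e : L →ₗ[F] L)} = ⊤) := by
  set S : Set (Submodule F L) := {W : Submodule F L | ∃ e : L ≃ₗ[F] L, IsMulAut mul e ∧
      W = I.map (e : L →ₗ[F] L)} with hS
  have hSmin : ∀ W ∈ S, IsMinIdeal mul W := by
    rintro W ⟨e, he, rfl⟩
    exact aux_map_min he hI
  refine ⟨fun J hJ hd => aux_prod_zero halt hI.1 hJ hd, fun htop => ⟨?_, htop⟩⟩
  intro W hWS
  have hWmin := hSmin W hWS
  set K := sSup (S \ {W}) with hK
  have hKideal : IsAlgIdeal mul K := aux_sSup (fun W' hW' => (hSmin W' hW'.1).1)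
  have hWKideal : IsAlgIdeal mul (W ⊓ K) := fun x hx y =>
    ⟨hWmin.1 x hx.1 y, hKideal x hx.2 y⟩
  rcases hWmin.2.2 _ hWKideal inf_le_left with h | h
  · exact disjoint_iff.mpr h
  · -- W ≤ K : derive contradiction with W ≠ ⊥
    exfalso
    have hWleK : W ≤ K := inf_eq_left.mp h
    have hKtop : K = ⊤ := by
      rw [← htop]
      apply le_antisymm (sSup_le_sSup Set.diff_subset)
      apply sSup_le
      intro W' hW'
      rcases eq_or_ne W' W with rfl | hne
      · exact hWleK
      · exact le_sSup ⟨hW', hne⟩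
    apply hWmin.2.1
    rw [eq_bot_iff]
    intro w hw
    have hwz : w = 0 := by
      apply hz
      intro y
      have hy : y ∈ K := hKtop ▸ Submodule.mem_top
      have hKker : K ≤ LinearMap.ker (mul w) := by
        apply sSup_le
        rintro W' ⟨hW'S, hW'ne⟩
        have hW'min := hSmin W' hW'S
        -- W ⊓ W' = ⊥
        have hd : W ⊓ W' = ⊥ := by
          have hinf : IsAlgIdeal mul (W ⊓ W') := fun x hx y =>
            ⟨hWmin.1 x hx.1 y, hW'min.1 x hx.2 y⟩
          rcases hW'min.2.2 _ hinf inf_le_right with h' | h'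
          · exact h'
          · exfalso
            have hW'leW : W' ≤ W := inf_eq_right.mp h'
            rcases hWmin.2.2 W' hW'min.1 hW'leW with h'' | h''
            · exact hW'min.2.1 h''
            · exact hW'ne h''
        intro k hk
        exact aux_prod_zero halt hWmin.1 hW'min.1 hd w hw k hk
      exact hKker hy
    simp [hwz]
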